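/- If T ≤ 0 or L ≥ 0 (with T = 1-A+M, L = A(M+1)-Q-M, A > 0, M < 0, Q > 0), then the cubic g(u) = u^3 - T u^2 - L u + A M has exactly one positive real root. -/
import Mathlib


/-- if T ≤ 0 or L ≥ 0 then g has exactly one positive real root. -/
theorem stmt_1 (A M Q : ℝ) (hA : 0 < A) (hA1 : A < 1) (hM : M < 0) (hQ : 0 < Q)
    (T L : ℝ) (hT : T = 1 - A + M) (hL : L = A * (M + 1) - Q - M)
    (g : ℝ → ℝ) (hg : ∀ u, g u = u ^ 3 - T * u ^ 2 - L * u + A * M)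
    (hcase : T ≤ 0 ∨ 0 ≤ L) :
    ∃! u : ℝ, 0 < u ∧ g u = 0 := by
  have hAM : A * M < 0 := mul_neg_of_pos_of_neg hA hM
  -- uniqueness part
  have key : ∀ a b : ℝ, 0 < a → a < b → g a = 0 → g b = 0 → False := by
    intro a b ha hab hga hgb
    have hb : 0 < b := ha.trans hab
    rw [hg] at hga hgb
    rcases hcase with hc | hc
    · have h1 : 0 < a * b * (b - a) * (a + b - T) := by
        apply mul_pos (mul_pos (mul_pos ha hb) (by linarith))
        linarith
      nlinarith [h1, mul_neg_of_neg_of_pos hAM (sub_pos.mpr hab)]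
    · have h1 : 0 < a * a * b * b * (b - a) := by
        apply mul_pos _ (by linarith : (0:ℝ) < b - a)
        positivity
      have h2 : 0 ≤ L * a * b * (b - a) :=
        mul_nonneg (mul_nonneg (mul_nonneg hc ha.le) hb.le) (by linarith)
      have h3 : A * M * ((b - a) * (a + b)) < 0 :=
        mul_neg_of_neg_of_pos hAM (mul_pos (by linarith) (by linarith))
      nlinarith [h1, h2, h3]
  -- existence
  have hcont : Continuous g := by
    have : g = fun u => u ^ 3 - T * u ^ 2 - L * u + A * M := funext hg
    rw [this]; continuity
  set R : ℝ := 1 + |T| + |L| + |A * M| with hR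
  have hR1 : (1 : ℝ) ≤ R := by
    have := abs_nonneg T; have := abs_nonneg L; have := abs_nonneg (A * M)
    linarith
  have hg0 : g 0 < 0 := by rw [hg]; nlinarith
  have hgR : 0 < g R := by
    rw [hg]
    have h1 : T ≤ |T| := le_abs_self T
    have h2 : L ≤ |L| := le_abs_self L
    have h3 : -|A * M| ≤ A * M := neg_abs_le _
    nlinarith [abs_nonneg T, abs_nonneg L, abs_nonneg (A * M), sq_nonneg R,
      mul_le_mul_of_nonneg_left h1 (sq_nonneg R), sq_nonneg (R - 1)]
  obtain ⟨u, hu, hgu⟩ : ∃ u ∈ Set.Ioo (0 : ℝ) R, g u = 0 := by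
    have hsub := intermediate_value_Ioo (by linarith : (0:ℝ) ≤ R) hcont.continuousOn
    have h0 : (0 : ℝ) ∈ Set.Ioo (g 0) (g R) := ⟨hg0, hgR⟩
    obtain ⟨u, hu, hgu⟩ := hsub h0
    exact ⟨u, hu, hgu⟩
  refine ⟨u, ⟨hu.1, hgu⟩, ?_⟩
  rintro v ⟨hv, hgv⟩
  rcases lt_trichotomy v u with h | h | h
  · exact absurd (key v u hv h hgv hgu) not_false
  · exact h
  · exact absurd (key u v hu.1 h hgu hgv) not_false
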